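/- (Lemma 21.1) If q₁ and q₂ are real binary quadratic forms that are linearly independent over ℝ, then there exist an invertible 2×2 real matrix A and real numbers d₁, d₂ such that d₁·q₁(A·v) + d₂·q₂(A·v) = v₁·v₂ for all v = (v₁, v₂) ∈ ℝ². -/

import Mathlib

theorem normalize_aux (α β γ : ℝ) (h : 0 < β^2 - 4*α*γ) :
    ∃ A : Matrix (Fin 2) (Fin 2) ℝ, A.det ≠ 0 ∧ ∃ k : ℝ, k ≠ 0 ∧ ∀ x y : ℝ,
      α*(A 0 0*x + A 0 1*y)^2 + β*(A 0 0*x + A 0 1*y)*(A 1 0*x + A 1 1*y)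
        + γ*(A 1 0*x + A 1 1*y)^2 = k*(x*y) := by
  by_cases hα : α = 0
  · have hβ : β ≠ 0 := by
      intro h0
      rw [hα, h0] at h
      nlinarith
    refine ⟨!![-γ/β, 1/β; 1, 0], ?_, 1, one_ne_zero, ?_⟩
    · rw [Matrix.det_fin_two_of]
      field_simp
      exact div_ne_zero (by norm_num) hβ
    · intro x y
      have e00 : (!![-γ/β, 1/β; (1:ℝ), 0]) 0 0 = -γ/β := by norm_num
      have e01 : (!![-γ/β, 1/β; (1:ℝ), 0]) 0 1 = 1/β := by norm_num
      have e10 : (!![-γ/β, 1/β; (1:ℝ), 0]) 1 0 = 1 := by norm_num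
      have e11 : (!![-γ/β, 1/β; (1:ℝ), 0]) 1 1 = 0 := by norm_num
      rw [e00, e01, e10, e11, hα]
      field_simp
      ring
  · have hδ : (0:ℝ) < Real.sqrt (β^2-4*α*γ) := Real.sqrt_pos.mpr h
    set δ := Real.sqrt (β^2-4*α*γ) with hδdef
    have hδ2 : δ^2 = β^2 - 4*α*γ := Real.sq_sqrt h.le
    have hγ : γ = (β^2 - δ^2)/(4*α) := by
      field_simp
      linear_combination hδ2
    refine ⟨!![(β+δ)/(2*δ), (δ-β)/(2*δ); -α/δ, α/δ], ?_, α, hα, ?_⟩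
    · rw [Matrix.det_fin_two_of]
      have e : (β+δ)/(2*δ) * (α/δ) - (δ-β)/(2*δ) * (-α/δ) = α/δ := by
        field_simp
        ring
      rw [e]
      exact div_ne_zero hα hδ.ne'
    · intro x y
      have e00 : (!![(β+δ)/(2*δ), (δ-β)/(2*δ); -α/δ, α/δ]) 0 0 = (β+δ)/(2*δ) := by norm_num
      have e01 : (!![(β+δ)/(2*δ), (δ-β)/(2*δ); -α/δ, α/δ]) 0 1 = (δ-β)/(2*δ) := by norm_num
      have e10 : (!![(β+δ)/(2*δ), (δ-β)/(2*δ); -α/δ, α/δ]) 1 0 = -α/δ := by norm_num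
      have e11 : (!![(β+δ)/(2*δ), (δ-β)/(2*δ); -α/δ, α/δ]) 1 1 = α/δ := by norm_num
      rw [e00, e01, e10, e11, hγ]
      field_simp
      ring

/-- **Lemma 21.1.** A linearly independent pair of real binary quadratic forms can be
normalized, by an invertible linear change of variables and a linear combination,
so that the combination becomes the form `xy`. -/
theorem lemma_21_1
    (q₁ q₂ : ℝ → ℝ → ℝ)
    (hq₁ : ∃ α β γ : ℝ, ∀ x y : ℝ, q₁ x y = α * x ^ 2 + β * x * y + γ * y ^ 2)
    (hq₂ : ∃ α β γ : ℝ, ∀ x y : ℝ, q₂ x y = α * x ^ 2 + β * x * y + γ * y ^ 2)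
    (hind : ∀ c d : ℝ, (∀ x y : ℝ, c * q₁ x y + d * q₂ x y = 0) → c = 0 ∧ d = 0) :
    ∃ A : Matrix (Fin 2) (Fin 2) ℝ, A.det ≠ 0 ∧
      ∃ d₁ d₂ : ℝ, ∀ x y : ℝ,
        d₁ * q₁ (A 0 0 * x + A 0 1 * y) (A 1 0 * x + A 1 1 * y)
          + d₂ * q₂ (A 0 0 * x + A 0 1 * y) (A 1 0 * x + A 1 1 * y) = x * y := by
  obtain ⟨a₁, b₁, c₁, h1⟩ := hq₁
  obtain ⟨a₂, b₂, c₂, h2⟩ := hq₂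
  have hind' : ∀ c d : ℝ, c*a₁+d*a₂ = 0 → c*b₁+d*b₂ = 0 → c*c₁+d*c₂ = 0 →
      c = 0 ∧ d = 0 := by
    intro c d ha hb hc
    refine hind c d ?_
    intro x y
    rw [h1, h2]
    linear_combination x^2*ha + (x*y)*hb + y^2*hc
  -- Step 1: some combination has positive discriminant
  obtain ⟨c, d, hD⟩ : ∃ c d : ℝ,
      0 < (c*b₁+d*b₂)^2 - 4*(c*a₁+d*a₂)*(c*c₁+d*c₂) := by
    by_contra hcon
    push_neg at hcon
    have hu : a₁*b₂ - a₂*b₁ = 0 := by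
      have h := hcon a₂ (-a₁)
      have h2 : (a₁*b₂ - a₂*b₁)^2 ≤ 0 := by nlinarith [h]
      have := le_antisymm h2 (sq_nonneg _)
      exact pow_eq_zero_iff (two_ne_zero) |>.mp this
    have hw : b₁*c₂ - b₂*c₁ = 0 := by
      have h := hcon c₂ (-c₁)
      have h2 : (b₁*c₂ - b₂*c₁)^2 ≤ 0 := by nlinarith [h]
      have := le_antisymm h2 (sq_nonneg _)
      exact pow_eq_zero_iff (two_ne_zero) |>.mp this
    have hv : a₁*c₂ - a₂*c₁ = 0 := by
      have h := hcon (c₂+a₂) (-(c₁+a₁))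
      have hb0 : (c₂+a₂)*b₁ + (-(c₁+a₁))*b₂ = 0 := by linear_combination hw - hu
      have h2 : (a₁*c₂ - a₂*c₁)^2 ≤ 0 := by nlinarith [h, hb0, sq_nonneg ((c₂+a₂)*b₁ + (-(c₁+a₁))*b₂)]
      have := le_antisymm h2 (sq_nonneg _)
      exact pow_eq_zero_iff (two_ne_zero) |>.mp this
    by_cases ha1 : a₁ = 0
    · by_cases hb1 : b₁ = 0
      · by_cases hc1 : c₁ = 0
        · have := hind' 1 0 (by rw [ha1]; ring) (by rw [hb1]; ring) (by rw [hc1]; ring)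
          exact one_ne_zero this.1
        · have := hind' c₂ (-c₁) (by linear_combination hv) (by linear_combination hw)
            (by ring)
          exact hc1 (neg_eq_zero.mp this.2)
      · have := hind' b₂ (-b₁) (by linear_combination hu) (by ring)
          (by linear_combination -hw)
        exact hb1 (neg_eq_zero.mp this.2)
    · have := hind' a₂ (-a₁) (by ring) (by linear_combination -hu)
        (by linear_combination -hv)
      exact ha1 (neg_eq_zero.mp this.2)
  -- Step 2: normalize that combination
  obtain ⟨A, hdet, k, hk, hkey⟩ := normalize_aux (c*a₁+d*a₂) (c*b₁+d*b₂) (c*c₁+d*c₂) hD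
  refine ⟨A, hdet, c/k, d/k, ?_⟩
  intro x y
  rw [h1, h2]
  have h := hkey x y
  field_simp
  linear_combination h
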